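/- arXiv:1511.00721 — 5 statements merged into one kernel-verified Lean document; each statement's English description precedes it below -/
import Mathlib

section
/- The function s(t) = |t|/(1 + a|t|/2) - |t| (for a ≥ 0) is concave on ℝ. -/
open Set

section aux

variable {a : ℝ}

private lemma denom_pos (ha : 0 ≤ a) {u : ℝ} (hu : 0 ≤ u) : 0 < 1 + a * u / 2 := by
  have : 0 ≤ a * u / 2 := by positivity
  linarith

private lemma hasDerivAt_h (ha : 0 ≤ a) {u : ℝ} (hu : 0 ≤ u) :
    HasDerivAt (fun u : ℝ => u / (1 + a * u / 2) - u)
      (1 / (1 + a * u / 2) ^ 2 - 1) u := by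
  have hd : (1 + a * u / 2) ≠ 0 := (denom_pos ha hu).ne'
  have h1 : HasDerivAt (fun u : ℝ => 1 + a * u / 2) (a / 2) u := by
    simpa using ((hasDerivAt_id u).const_mul a).div_const 2 |>.const_add 1
  have h2 : HasDerivAt (fun u : ℝ => u / (1 + a * u / 2))
      ((1 * (1 + a * u / 2) - u * (a / 2)) / (1 + a * u / 2) ^ 2) u :=
    (hasDerivAt_id u).div h1 hd
  have h3 := h2.sub (hasDerivAt_id u)
  refine h3.congr_deriv ?_
  field_simp
  ring

private lemma hasDerivAt_g (ha : 0 ≤ a) {u : ℝ} (hu : 0 ≤ u) :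
    HasDerivAt (fun u : ℝ => 1 / (1 + a * u / 2) ^ 2 - 1)
      (-a / (1 + a * u / 2) ^ 3) u := by
  have hd : (1 + a * u / 2) ≠ 0 := (denom_pos ha hu).ne'
  have h1 : HasDerivAt (fun u : ℝ => 1 + a * u / 2) (a / 2) u := by
    simpa using ((hasDerivAt_id u).const_mul a).div_const 2 |>.const_add 1
  have h2 : HasDerivAt (fun u : ℝ => (1 + a * u / 2) ^ 2)
      (2 * (1 + a * u / 2) ^ 1 * (a / 2)) u := h1.pow 2
  have h3 := (h2.inv (by positivity)).sub_const 1
  simp only [one_div]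
  refine h3.congr_deriv ?_
  field_simp

private lemma deriv_h_eq (ha : 0 ≤ a) {u : ℝ} (hu : 0 ≤ u) :
    deriv (fun u : ℝ => u / (1 + a * u / 2) - u) u = 1 / (1 + a * u / 2) ^ 2 - 1 :=
  (hasDerivAt_h ha hu).deriv

private lemma continuousOn_h (ha : 0 ≤ a) :
    ContinuousOn (fun u : ℝ => u / (1 + a * u / 2) - u) (Ici 0) := by
  apply ContinuousOn.sub _ continuousOn_id
  exact ContinuousOn.div continuousOn_id (by fun_prop)
    (fun u hu => (denom_pos ha hu).ne')

private lemma concaveOn_h (ha : 0 ≤ a) :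
    ConcaveOn ℝ (Ici 0) (fun u : ℝ => u / (1 + a * u / 2) - u) := by
  apply concaveOn_of_deriv2_nonpos (convex_Ici 0) (continuousOn_h ha)
  · intro u hu
    rw [interior_Ici] at hu
    exact (hasDerivAt_h ha (le_of_lt hu)).differentiableAt.differentiableWithinAt
  · intro u hu
    rw [interior_Ici] at hu
    have : deriv (fun u : ℝ => u / (1 + a * u / 2) - u) =ᶠ[nhds u]
        (fun u : ℝ => 1 / (1 + a * u / 2) ^ 2 - 1) := by
      filter_upwards [IsOpen.mem_nhds isOpen_Ioi hu] with v hv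
      exact deriv_h_eq ha (le_of_lt hv)
    exact ((hasDerivAt_g ha hu.le).differentiableAt.congr_of_eventuallyEq
      this).differentiableWithinAt
  · intro u hu
    rw [interior_Ici] at hu
    have heq : deriv (fun u : ℝ => u / (1 + a * u / 2) - u) =ᶠ[nhds u]
        (fun u : ℝ => 1 / (1 + a * u / 2) ^ 2 - 1) := by
      filter_upwards [IsOpen.mem_nhds isOpen_Ioi hu] with v hv
      exact deriv_h_eq ha (le_of_lt hv)
    have : deriv^[2] (fun u : ℝ => u / (1 + a * u / 2) - u) u
        = -a / (1 + a * u / 2) ^ 3 := by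
      rw [Function.iterate_succ, Function.iterate_one, Function.comp_apply,
        heq.deriv_eq, (hasDerivAt_g ha hu.le).deriv]
    rw [this]
    have hd := denom_pos ha hu.le
    have h0 : 0 ≤ a / (1 + a * u / 2) ^ 3 := by positivity
    simpa [neg_div] using neg_nonpos.mpr h0

private lemma antitoneOn_h (ha : 0 ≤ a) :
    AntitoneOn (fun u : ℝ => u / (1 + a * u / 2) - u) (Ici 0) := by
  apply antitoneOn_of_deriv_nonpos (convex_Ici 0) (continuousOn_h ha)
  · intro u hu
    rw [interior_Ici] at hu
    exact (hasDerivAt_h ha hu.le).differentiableAt.differentiableWithinAt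
  · intro u hu
    rw [interior_Ici] at hu
    rw [deriv_h_eq ha hu.le]
    have hd := denom_pos ha hu.le
    have h1 : 1 ≤ (1 + a * u / 2) ^ 2 := by nlinarith [mul_nonneg ha hu.le]
    have : 1 / (1 + a * u / 2) ^ 2 ≤ 1 := by
      rw [div_le_one (by positivity)]; exact h1
    linarith

end aux

theorem stmt_0 (a : ℝ) (ha : 0 ≤ a) :
    ConcaveOn ℝ Set.univ (fun t : ℝ => |t| / (1 + a * |t| / 2) - |t|) := by
  have himg : (abs '' (Set.univ : Set ℝ)) = Ici 0 := by
    ext x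
    constructor
    · rintro ⟨y, -, rfl⟩; exact abs_nonneg y
    · intro hx; exact ⟨x, trivial, abs_of_nonneg hx⟩
  have hconvex_abs : ConvexOn ℝ Set.univ (abs : ℝ → ℝ) := by
    have := convexOn_univ_norm (E := ℝ)
    exact this
  exact ConcaveOn.comp_convexOn (himg ▸ concaveOn_h ha) hconvex_abs
    (himg ▸ antitoneOn_h ha)
end

section
/- For a > 0, the function s(t) = (1/a)·log(1 + a|t|) - |t| is concave on ℝ. -/
open Set Real

lemma g_concave (a : ℝ) (ha : 0 < a) :
    ConcaveOn ℝ (Ici 0) (fun u : ℝ => (1 / a) * Real.log (1 + a * u) - u) := by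
  have hlog : ConcaveOn ℝ (Ici 0) (fun u : ℝ => Real.log (1 + a * u)) := by
    have haff : ConcaveOn ℝ ((fun u : ℝ => 1 + a * u) ⁻¹' (Ioi 0))
        (fun u : ℝ => Real.log (1 + a * u)) := by
      have h := strictConcaveOn_log_Ioi.concaveOn.comp_affineMap
        (AffineMap.const ℝ ℝ (1:ℝ) + a • AffineMap.id ℝ ℝ)
      simpa [Function.comp_def, smul_eq_mul, Set.preimage] using h
    refine (haff.subset ?_ (convex_Ici 0))
    intro u hu
    simp only [mem_preimage, mem_Ioi]
    have : 0 ≤ a * u := mul_nonneg ha.le hu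
    linarith
  have h1 : ConcaveOn ℝ (Ici 0) (fun u : ℝ => (1 / a) * Real.log (1 + a * u)) :=
    hlog.smul (by positivity)
  exact h1.sub (convexOn_id (convex_Ici 0))

lemma g_antitone (a : ℝ) (ha : 0 < a) :
    AntitoneOn (fun u : ℝ => (1 / a) * Real.log (1 + a * u) - u) (Ici 0) := by
  intro x hx y hy hxy
  simp only [mem_Ici] at hx hy
  have hx1 : (0:ℝ) < 1 + a * x := by nlinarith
  have hy1 : (0:ℝ) < 1 + a * y := by nlinarith
  have hq : (0:ℝ) < (1 + a * y) / (1 + a * x) := div_pos hy1 hx1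
  have hlog : Real.log ((1 + a * y) / (1 + a * x)) ≤ (1 + a * y) / (1 + a * x) - 1 :=
    Real.log_le_sub_one_of_pos hq
  rw [Real.log_div hy1.ne' hx1.ne'] at hlog
  have hfrac : (1 + a * y) / (1 + a * x) - 1 = a * (y - x) / (1 + a * x) := by
    field_simp
    ring
  rw [hfrac] at hlog
  have hfrac2 : a * (y - x) / (1 + a * x) ≤ a * (y - x) := by
    apply div_le_self (by nlinarith) (by nlinarith)
  have key : Real.log (1 + a * y) - Real.log (1 + a * x) ≤ a * (y - x) := hlog.trans hfrac2
  have : (1/a) * (Real.log (1 + a * y) - Real.log (1 + a * x)) ≤ y - x := by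
    rw [div_mul_eq_mul_div, one_mul, div_le_iff₀ ha] at *
    nlinarith [key]
  linarith [this, mul_sub (1/a) (Real.log (1 + a * y)) (Real.log (1 + a * x))]

theorem stmt_1 (a : ℝ) (ha : 0 < a) :
    ConcaveOn ℝ Set.univ (fun t : ℝ => (1 / a) * Real.log (1 + a * |t|) - |t|) := by
  have himg : (fun t : ℝ => |t|) '' univ = Ici 0 := by
    ext u
    simp only [image_univ, mem_range, mem_Ici]
    constructor
    · rintro ⟨t, rfl⟩; exact abs_nonneg t
    · intro hu; exact ⟨u, abs_of_nonneg hu⟩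
  have hg : ConcaveOn ℝ ((fun t : ℝ => |t|) '' univ)
      (fun u : ℝ => (1 / a) * Real.log (1 + a * u) - u) := himg ▸ g_concave a ha
  have hg' : AntitoneOn (fun u : ℝ => (1 / a) * Real.log (1 + a * u) - u)
      ((fun t : ℝ => |t|) '' univ) := himg ▸ g_antitone a ha
  have habs : ConvexOn ℝ (univ : Set ℝ) (fun t : ℝ => |t|) := convexOn_univ_norm
  exact hg.comp_convexOn habs hg'
end

section
/- Let s : ℝ → ℝ be concave, even (s(-t) = s(t)), with s(0) = 0, and let 0 ≤ r ≤ 1. Then for all x₁ ≤ 0 ≤ x₂ with x₂ ≥ -x₁: s(r·x₁ + x₂) + r·s(x₁) ≥ s(x₂). -/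
lemma concave_rearrange (s : ℝ → ℝ) (hs : ConcaveOn ℝ Set.univ s)
    (u v h : ℝ) (huv : u ≤ v) (hh : 0 ≤ h) :
    s u + s (v + h) ≤ s (u + h) + s v := by
  set D := v - u + h with hD
  rcases eq_or_lt_of_le (by linarith : (0:ℝ) ≤ D) with hD0 | hD0
  · have hh0 : h = 0 := by nlinarith [sub_nonneg.mpr huv]
    have huv0 : u = v := by nlinarith
    subst hh0; subst huv0; simp
  · have hl : (0:ℝ) ≤ (v - u) / D := div_nonneg (by linarith) hD0.le
    have hm : (0:ℝ) ≤ h / D := div_nonneg hh hD0.le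
    have hsum : (v - u) / D + h / D = 1 := by field_simp; linarith
    have h1 := hs.2 (Set.mem_univ u) (Set.mem_univ (v + h)) hl hm hsum
    have h2 := hs.2 (Set.mem_univ u) (Set.mem_univ (v + h)) hm hl
      (by linarith : h / D + (v - u) / D = 1)
    have e1 : ((v - u) / D) • u + (h / D) • (v + h) = u + h := by
      rw [smul_eq_mul, smul_eq_mul, div_mul_eq_mul_div, div_mul_eq_mul_div, ← add_div, div_eq_iff hD0.ne', hD]; ring
    have e2 : (h / D) • u + ((v - u) / D) • (v + h) = v := by
      rw [smul_eq_mul, smul_eq_mul, div_mul_eq_mul_div, div_mul_eq_mul_div, ← add_div, div_eq_iff hD0.ne', hD]; ring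
    rw [e1] at h1
    rw [e2] at h2
    simp only [smul_eq_mul] at h1 h2
    have hq : h / D = 1 - (v - u) / D := by linarith
    rw [hq] at h1 h2
    nlinarith [h1, h2]

theorem stmt_13 (s : ℝ → ℝ) (hs : ConcaveOn ℝ Set.univ s)
    (heven : ∀ t, s (-t) = s t) (h0 : s 0 = 0)
    (r : ℝ) (hr0 : 0 ≤ r) (hr1 : r ≤ 1)
    (x₁ x₂ : ℝ) (hx₁ : x₁ ≤ 0) (hx₂ : 0 ≤ x₂) (hx : -x₁ ≤ x₂) :
    s x₂ ≤ s (r * x₁ + x₂) + r * s x₁ := by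
  set a := -x₁ with ha
  have ha0 : 0 ≤ a := by linarith
  have key := concave_rearrange s hs ((1 - r) * a) (x₂ - r * a) (r * a)
    (by nlinarith) (by positivity)
  rw [show (1 - r) * a + r * a = a by ring,
      show x₂ - r * a + r * a = x₂ by ring] at key
  have hcc := hs.2 (Set.mem_univ a) (Set.mem_univ 0) (by linarith : 0 ≤ 1 - r)
    hr0 (by ring)
  rw [show (1 - r) • a + r • (0:ℝ) = (1 - r) * a by simp] at hcc
  simp only [smul_eq_mul, h0, mul_zero, add_zero] at hcc
  have hse : s a = s x₁ := by rw [ha, heven]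
  rw [show r * x₁ + x₂ = x₂ - r * a by rw [ha]; ring]
  nlinarith [key, hcc, hse]
end

section
/- Let h : ℤ → ℝ be finitely supported with discrete-time Fourier transform H(ω) = Σₙ hₙ·e^{-iωn}, and let p₀, p₁ ∈ ℝ with P(ω) = p₀ + 2p₁·cos(ω). If 0 ≤ P(ω) ≤ |H(ω)|² for all ω ∈ [-π, π], then for every N the N×N symmetric tridiagonal Toeplitz matrix P (diagonal p₀, off-diagonal p₁) satisfies 0 ⪯ P ⪯ HᵀH, where H is the N-column convolution matrix of h. -/
noncomputable def ee (m : ℤ) (ω : ℝ) : ℂ := Complex.exp (Complex.I * ω * m)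

lemma ee_cont (m : ℤ) : Continuous (ee m) := by
  unfold ee; fun_prop

lemma ee_mul (a b : ℤ) (ω : ℝ) : ee a ω * ee b ω = ee (a + b) ω := by
  unfold ee
  rw [← Complex.exp_add]
  push_cast
  ring_nf

lemma ee_conj (m : ℤ) (ω : ℝ) : (starRingEnd ℂ) (ee m ω) = ee (-m) ω := by
  unfold ee
  rw [← Complex.exp_conj]
  push_cast
  simp [map_mul, Complex.conj_I]

lemma integral_ee (m : ℤ) :
    (∫ ω in (-Real.pi)..Real.pi, ee m ω) = if m = 0 then ((2 * Real.pi : ℝ) : ℂ) else 0 := by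
  rcases eq_or_ne m 0 with rfl | hm
  · simp [ee]
    ring
  · rw [if_neg hm]
    have hc : (Complex.I * m) ≠ 0 := by
      simp [Complex.I_ne_zero, hm]
    have h : ∀ ω : ℝ, ee m ω = Complex.exp ((Complex.I * m) * ω) := by
      intro ω; unfold ee; ring_nf
    simp_rw [h]
    rw [integral_exp_mul_complex hc]
    have h2 : Complex.exp (Complex.I * m * (Real.pi : ℂ)) = Complex.exp (Complex.I * m * ((-Real.pi : ℝ) : ℂ)) := by
      rw [show (Complex.I * m * (Real.pi : ℂ)) = Complex.I * m * ((-Real.pi : ℝ) : ℂ) + m * (2 * Real.pi * Complex.I) by push_cast; ring,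
        Complex.exp_add, Complex.exp_int_mul_two_pi_mul_I, mul_one]
    rw [h2, sub_self, zero_div]

lemma integral_const_mul_ee (c : ℂ) (m : ℤ) :
    (∫ ω in (-Real.pi)..Real.pi, c * ee m ω) = if m = 0 then ((2 * Real.pi : ℝ) : ℂ) * c else 0 := by
  rw [intervalIntegral.integral_const_mul, integral_ee]
  split <;> ring

open intervalIntegral in
lemma integral_sum_mul_sum {ι κ : Type*} (s : Finset ι) (t : Finset κ)
    (f : ι → ℂ) (g : κ → ℂ) (a : ι → ℤ) (b : κ → ℤ) :
    (∫ ω in (-Real.pi)..Real.pi,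
      (∑ i ∈ s, f i * ee (a i) ω) * (∑ j ∈ t, g j * ee (b j) ω))
    = ((2 * Real.pi : ℝ) : ℂ) *
      ∑ i ∈ s, ∑ j ∈ t, (if a i + b j = 0 then f i * g j else 0) := by
  have hpt : ∀ ω : ℝ,
      (∑ i ∈ s, f i * ee (a i) ω) * (∑ j ∈ t, g j * ee (b j) ω)
      = ∑ i ∈ s, ∑ j ∈ t, (f i * g j) * ee (a i + b j) ω := by
    intro ω
    rw [Finset.sum_mul_sum]
    refine Finset.sum_congr rfl fun i _ => Finset.sum_congr rfl fun j _ => ?_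
    rw [← ee_mul]; ring
  simp_rw [hpt]
  rw [intervalIntegral.integral_finset_sum]
  · refine Eq.trans (Finset.sum_congr rfl fun i _ => intervalIntegral.integral_finset_sum ?_) ?_
    · intro j _
      exact (Continuous.intervalIntegrable (continuous_const.mul (ee_cont _)) _ _)
    · rw [Finset.mul_sum]
      refine Finset.sum_congr rfl fun i _ => ?_
      rw [Finset.mul_sum]
      refine Finset.sum_congr rfl fun j _ => ?_
      rw [integral_const_mul_ee]
      split <;> simp [mul_comm]
  · intro i _
    refine Continuous.intervalIntegrable ?_ _ _
    exact continuous_finset_sum _ fun j _ => continuous_const.mul (ee_cont _)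

noncomputable def XX {N : ℕ} (x : Fin N → ℝ) (ω : ℝ) : ℂ :=
  ∑ j : Fin N, (x j : ℂ) * ee (-((j : ℕ) : ℤ)) ω

lemma XX_conj {N : ℕ} (x : Fin N → ℝ) (ω : ℝ) :
    (starRingEnd ℂ) (XX x ω) = ∑ j : Fin N, (x j : ℂ) * ee ((j : ℕ) : ℤ) ω := by
  unfold XX
  rw [map_sum]
  refine Finset.sum_congr rfl fun j _ => ?_
  rw [map_mul, ee_conj, Complex.conj_ofReal, neg_neg]

lemma P_int (p₀ p₁ : ℝ) (N : ℕ) (x : Fin N → ℝ) :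
    (∫ ω in (-Real.pi)..Real.pi,
      (p₀ + 2 * p₁ * Real.cos ω) * Complex.normSq (XX x ω))
    = (2 * Real.pi) * ∑ j : Fin N, ∑ k : Fin N, x j * x k *
        (if (j : ℕ) = (k : ℕ) then p₀
         else if (j : ℕ) + 1 = (k : ℕ) ∨ (k : ℕ) + 1 = (j : ℕ) then p₁ else 0) := by
  have key : ∀ ω : ℝ, (((p₀ + 2 * p₁ * Real.cos ω) * Complex.normSq (XX x ω) : ℝ) : ℂ)
      = (∑ p ∈ (({-1, 0, 1} : Finset ℤ) ×ˢ Finset.univ),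
          ((if p.1 = 0 then (p₀:ℂ) else p₁) * x p.2) * ee (p.1 - (p.2 : ℕ)) ω)
        * (∑ k : Fin N, (x k : ℂ) * ee ((k : ℕ) : ℤ) ω) := by
    intro ω
    rw [← XX_conj]
    push_cast
    rw [show (Complex.cos (ω:ℂ)) = (ee 1 ω + ee (-1) ω) / 2 by
      have e1 : Complex.exp ((ω:ℂ) * Complex.I) = ee 1 ω := by unfold ee; congr 1; push_cast; ring
      have e2 : Complex.exp (-(ω:ℂ) * Complex.I) = ee (-1) ω := by unfold ee; congr 1; push_cast; ring
      rw [Complex.cos, e1, e2]]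
    rw [← Complex.mul_conj, ← mul_assoc]
    have expand : ((p₀ : ℂ) + 2 * p₁ * ((ee 1 ω + ee (-1) ω) / 2)) * XX x ω
        = ∑ p ∈ (({-1, 0, 1} : Finset ℤ) ×ˢ Finset.univ),
          ((if p.1 = 0 then (p₀:ℂ) else p₁) * x p.2) * ee (p.1 - (p.2 : ℕ)) ω := by
      rw [Finset.sum_product]
      have : ∀ m : ℤ, ∑ j : Fin N, ((if m = 0 then (p₀:ℂ) else p₁) * x j) * ee (m - (j : ℕ)) ω
          = (if m = 0 then (p₀:ℂ) else p₁) * ee m ω * XX x ω := by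
        intro m
        unfold XX
        rw [Finset.mul_sum]
        refine Finset.sum_congr rfl fun j _ => ?_
        rw [show m - ((j:ℕ):ℤ) = m + -((j:ℕ):ℤ) by ring, ← ee_mul]
        ring
      simp only [this]
      have h0 : (0:ℤ) ∉ ({1} : Finset ℤ) := by decide
      have h1 : (-1:ℤ) ∉ ({0, 1} : Finset ℤ) := by decide
      rw [show ({-1, 0, 1} : Finset ℤ) = insert (-1) (insert 0 {1}) from rfl,
        Finset.sum_insert h1, Finset.sum_insert h0, Finset.sum_singleton]
      have eez : ee 0 ω = 1 := by unfold ee; norm_num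
      norm_num [eez]
      ring
    rw [expand]
  have hoR := intervalIntegral.integral_ofReal (f := fun ω => (p₀ + 2 * p₁ * Real.cos ω) * Complex.normSq (XX x ω)) (a := -Real.pi) (b := Real.pi) (μ := MeasureTheory.volume)
  apply Complex.ofReal_injective
  rw [← hoR]
  simp_rw [key]
  rw [integral_sum_mul_sum]
  push_cast
  congr 1
  rw [Finset.sum_product, Finset.sum_comm]
  refine Finset.sum_congr rfl fun j _ => ?_
  rw [Finset.sum_comm]
  refine Finset.sum_congr rfl fun k _ => ?_
  rw [show ({-1, 0, 1} : Finset ℤ) = insert (-1) (insert 0 {1}) from rfl,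
    Finset.sum_insert (by decide), Finset.sum_insert (by decide), Finset.sum_singleton]
  norm_num
  split_ifs <;> push_cast <;> first | ring1 | (exfalso; omega)

lemma G_int (h : ℤ → ℝ) (S : Finset ℤ) (hS : ∀ n, n ∉ S → h n = 0) (N : ℕ) (x : Fin N → ℝ) :
    (∫ ω in (-Real.pi)..Real.pi,
      Complex.normSq ((∑ n ∈ S, (h n : ℂ) * ee (-n) ω) * XX x ω))
    = (2 * Real.pi) * ∑ j : Fin N, ∑ k : Fin N, x j * x k *
        (∑ n ∈ S, h n * h (n + (j : ℕ) - (k : ℕ))) := by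
  have key : ∀ ω : ℝ, ((Complex.normSq ((∑ n ∈ S, (h n : ℂ) * ee (-n) ω) * XX x ω) : ℝ) : ℂ)
      = (∑ p ∈ S ×ˢ (Finset.univ : Finset (Fin N)),
          ((h p.1 : ℂ) * x p.2) * ee (-(p.1 + ((p.2 : ℕ) : ℤ))) ω)
        * (∑ q ∈ S ×ˢ (Finset.univ : Finset (Fin N)),
          ((h q.1 : ℂ) * x q.2) * ee (q.1 + ((q.2 : ℕ) : ℤ)) ω) := by
    intro ω
    rw [← Complex.mul_conj]
    have hL : (∑ n ∈ S, (h n : ℂ) * ee (-n) ω) * XX x ω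
        = ∑ p ∈ S ×ˢ (Finset.univ : Finset (Fin N)),
          ((h p.1 : ℂ) * x p.2) * ee (-(p.1 + ((p.2 : ℕ) : ℤ))) ω := by
      unfold XX
      rw [Finset.sum_mul_sum]
      rw [Finset.sum_product]
      refine Finset.sum_congr rfl fun n _ => Finset.sum_congr rfl fun j _ => ?_
      rw [show -(n + ((j:ℕ):ℤ)) = -n + -((j:ℕ):ℤ) by ring, ← ee_mul]
      ring
    rw [hL, map_sum]
    congr 1
    refine Finset.sum_congr rfl fun p _ => ?_
    rw [map_mul, ee_conj, neg_neg, map_mul, Complex.conj_ofReal, Complex.conj_ofReal]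
  have hoR := intervalIntegral.integral_ofReal
    (f := fun ω => Complex.normSq ((∑ n ∈ S, (h n : ℂ) * ee (-n) ω) * XX x ω))
    (a := -Real.pi) (b := Real.pi) (μ := MeasureTheory.volume)
  apply Complex.ofReal_injective
  rw [← hoR]
  simp_rw [key]
  rw [integral_sum_mul_sum]
  push_cast
  congr 1
  rw [Finset.sum_product, Finset.sum_comm]
  rw [Finset.sum_congr rfl (fun j _ => Finset.sum_congr rfl (fun n _ => Finset.sum_product ..))]
  rw [Finset.sum_congr rfl (fun j _ => Finset.sum_congr rfl (fun n _ => Finset.sum_comm))]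
  rw [Finset.sum_congr rfl (fun j _ => Finset.sum_comm)]
  refine Finset.sum_congr rfl fun j _ => Finset.sum_congr rfl fun k _ => ?_
  rw [Finset.mul_sum]
  refine Finset.sum_congr rfl fun n _ => ?_
  have hcond : ∀ m : ℤ, (-(n + ((j:ℕ):ℤ)) + (m + ((k:ℕ):ℤ)) = 0) ↔ m = n + ((j:ℕ):ℤ) - ((k:ℕ):ℤ) := by
    intro m; omega
  simp_rw [hcond]
  rw [Finset.sum_ite_eq' S (n + ((j:ℕ):ℤ) - ((k:ℕ):ℤ))
    (fun m => (h n : ℂ) * (x j) * ((h m : ℂ) * (x k)))]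
  by_cases hmem : n + ((j:ℕ):ℤ) - ((k:ℕ):ℤ) ∈ S
  · rw [if_pos hmem]; ring
  · rw [if_neg hmem, hS _ hmem]
    push_cast
    ring

open Matrix

theorem stmt_17 (h : ℤ → ℝ) (hfin : (Function.support h).Finite)
    (p₀ p₁ : ℝ)
    (Hw : ℝ → ℂ)
    (hHw : ∀ ω : ℝ, Hw ω = ∑ᶠ n : ℤ, (h n : ℂ) * Complex.exp (-Complex.I * ω * n))
    (hbound : ∀ ω ∈ Set.Icc (-Real.pi) Real.pi,
      0 ≤ p₀ + 2 * p₁ * Real.cos ω ∧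
      p₀ + 2 * p₁ * Real.cos ω ≤ ‖Hw ω‖ ^ 2) :
    ∀ (N : ℕ) (P G : Matrix (Fin N) (Fin N) ℝ),
      (∀ i j : Fin N, P i j =
        if (i : ℕ) = (j : ℕ) then p₀
        else if (i : ℕ) + 1 = (j : ℕ) ∨ (j : ℕ) + 1 = (i : ℕ) then p₁
        else 0) →
      (∀ j k : Fin N, G j k = ∑ᶠ i : ℤ, h (i - (j : ℕ)) * h (i - (k : ℕ))) →
      P.PosSemidef ∧ (G - P).PosSemidef := by
  intro N P G hP hG
  set S : Finset ℤ := hfin.toFinset with hSdef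
  have hS : ∀ n, n ∉ S → h n = 0 := by
    intro n hn
    by_contra hne
    exact hn (hfin.mem_toFinset.2 hne)
  -- Hw equals finite sum
  have hHc : ∀ ω : ℝ, Hw ω = ∑ n ∈ S, (h n : ℂ) * ee (-n) ω := by
    intro ω
    rw [hHw ω]
    have hsupp : Function.support (fun n : ℤ => (h n : ℂ) * Complex.exp (-Complex.I * ω * n)) ⊆ ↑S := by
      intro n hn
      simp only [Function.mem_support] at hn
      have : h n ≠ 0 := by
        intro h0
        apply hn
        rw [h0]; push_cast; ring
      exact hfin.mem_toFinset.2 this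
    rw [finsum_eq_sum_of_support_subset _ hsupp]
    refine Finset.sum_congr rfl fun n _ => ?_
    unfold ee
    congr 1
    push_cast
    ring
  -- G entries as finite sums
  have hGS : ∀ j k : Fin N, G j k = ∑ n ∈ S, h n * h (n + (j : ℕ) - (k : ℕ)) := by
    intro j k
    rw [hG j k]
    have hsupp : Function.support (fun i : ℤ => h (i - (j:ℕ)) * h (i - (k:ℕ)))
        ⊆ ↑(S.map (Equiv.addRight ((j:ℕ):ℤ)).toEmbedding) := by
      intro i hi
      simp only [Function.mem_support] at hi
      have h1 : h (i - (j:ℕ)) ≠ 0 := fun h0 => hi (by rw [h0]; ring)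
      simp only [Finset.coe_map, Set.mem_image, Finset.mem_coe]
      exact ⟨i - (j:ℕ), hfin.mem_toFinset.2 h1, by simp [Equiv.addRight]⟩
    rw [finsum_eq_sum_of_support_subset _ hsupp, Finset.sum_map]
    refine Finset.sum_congr rfl fun n _ => ?_
    simp only [Equiv.coe_toEmbedding, Equiv.coe_addRight]
    rw [show n + ((j:ℕ):ℤ) - ((j:ℕ):ℤ) = n by ring, show n + ((j:ℕ):ℤ) - ((k:ℕ):ℤ) = n + (j:ℕ) - (k:ℕ) by ring]
  -- continuity
  have contX : ∀ x : Fin N → ℝ, Continuous (XX x) := fun x =>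
    continuous_finset_sum _ fun j _ => continuous_const.mul (ee_cont _)
  have contH : Continuous (fun ω => ∑ n ∈ S, (h n : ℂ) * ee (-n) ω) :=
    continuous_finset_sum _ fun n _ => continuous_const.mul (ee_cont _)
  -- quadratic forms
  have quadP : ∀ x : Fin N → ℝ, (2 * Real.pi) * (x ⬝ᵥ (P *ᵥ x))
      = ∫ ω in (-Real.pi)..Real.pi, (p₀ + 2 * p₁ * Real.cos ω) * Complex.normSq (XX x ω) := by
    intro x
    rw [P_int p₀ p₁ N x]
    congr 1
    simp only [dotProduct, mulVec]
    refine Finset.sum_congr rfl fun j _ => ?_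
    rw [Finset.mul_sum]
    refine Finset.sum_congr rfl fun k _ => ?_
    rw [hP j k]
    ring
  have quadG : ∀ x : Fin N → ℝ, (2 * Real.pi) * (x ⬝ᵥ (G *ᵥ x))
      = ∫ ω in (-Real.pi)..Real.pi,
          Complex.normSq ((∑ n ∈ S, (h n : ℂ) * ee (-n) ω) * XX x ω) := by
    intro x
    rw [G_int h S hS N x]
    congr 1
    simp only [dotProduct, mulVec]
    refine Finset.sum_congr rfl fun j _ => ?_
    rw [Finset.mul_sum]
    refine Finset.sum_congr rfl fun k _ => ?_
    rw [hGS j k]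
    ring
  have twopi_pos : (0:ℝ) < 2 * Real.pi := by positivity
  -- P pos semidef
  have hPsd : P.PosSemidef := by
    constructor
    · ext i j
      simp only [conjTranspose_apply, star, hP i j, hP j i]
      split_ifs <;> first | rfl | omega
    · intro x
      have hnn : 0 ≤ ∫ ω in (-Real.pi)..Real.pi,
          (p₀ + 2 * p₁ * Real.cos ω) * Complex.normSq (XX x ω) := by
        apply intervalIntegral.integral_nonneg (by linarith [Real.pi_pos])
        intro u hu
        exact mul_nonneg (hbound u hu).1 (Complex.normSq_nonneg _)
      rw [← quadP x] at hnn
      have hxx := nonneg_of_mul_nonneg_right hnn twopi_pos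
      simpa [dotProduct, mulVec, Finsupp.sum_fintype, Finset.mul_sum, mul_assoc] using hxx
  refine ⟨hPsd, ?_, ?_⟩
  · -- (G - P) Hermitian
    have hGsym : G.IsHermitian := by
      ext i j
      simp only [conjTranspose_apply, star]
      rw [hG i j, hG j i]
      exact finsum_congr fun n => mul_comm _ _
    exact (hGsym.sub hPsd.1)
  · intro x
    have hmono : (∫ ω in (-Real.pi)..Real.pi,
          (p₀ + 2 * p₁ * Real.cos ω) * Complex.normSq (XX x ω))
        ≤ ∫ ω in (-Real.pi)..Real.pi,
          Complex.normSq ((∑ n ∈ S, (h n : ℂ) * ee (-n) ω) * XX x ω) := by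
      apply intervalIntegral.integral_mono_on (by linarith [Real.pi_pos])
      · exact Continuous.intervalIntegrable
          ((continuous_const.add (continuous_const.mul Real.continuous_cos)).mul
            (Complex.continuous_normSq.comp (contX x))) _ _
      · exact Continuous.intervalIntegrable
          (Complex.continuous_normSq.comp (contH.mul (contX x))) _ _
      · intro u hu
        rw [Complex.normSq_mul]
        have h1 : p₀ + 2 * p₁ * Real.cos u ≤ Complex.normSq (∑ n ∈ S, (h n : ℂ) * ee (-n) u) := by
          have := (hbound u hu).2
          rwa [Complex.sq_norm, hHc u] at this
        exact mul_le_mul_of_nonneg_right h1 (Complex.normSq_nonneg _)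
    rw [← quadP x, ← quadG x] at hmono
    have hdiff : 0 ≤ x ⬝ᵥ (G *ᵥ x) - x ⬝ᵥ (P *ᵥ x) := by nlinarith
    have : x ⬝ᵥ ((G - P) *ᵥ x) = x ⬝ᵥ (G *ᵥ x) - x ⬝ᵥ (P *ᵥ x) := by
      rw [sub_mulVec, dotProduct_sub]
    simpa [this, dotProduct, mulVec, Finsupp.sum_fintype, Finset.mul_sum, mul_assoc, sub_mul, mul_sub, Finset.sum_sub_distrib] using hdiff
end

section
/- Let φ : ℝ → ℝ be even, with φ restricted to [0,∞) twice continuously differentiable, φ(0) = 0, right derivative φ'(0⁺) = 1 and φ''(0⁺) = -a for some a ≥ 0. Let H be a 2×2 real matrix with HᵀH having minimum eigenvalue γ_min, and let λ > 0. If the function f(x) = (1/2)‖y - Hx‖² + λφ(x₁) + λφ(x₂) is convex on ℝ², then a ≤ γ_min/λ. -/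
open Set Filter Topology

lemma taylor_limit (φ : ℝ → ℝ) (a : ℝ)
    (hsmooth : ContDiffOn ℝ 2 φ (Set.Ici 0)) (h0 : φ 0 = 0)
    (hd1 : derivWithin φ (Set.Ici 0) 0 = 1)
    (hd2 : iteratedDerivWithin 2 φ (Set.Ici 0) 0 = -a) :
    Tendsto (fun x => (φ x - x) / x ^ 2) (𝓝[>] (0:ℝ)) (𝓝 (-a / 2)) := by
  set ψ := derivWithin φ (Set.Ici 0) with hψ
  have hud : UniqueDiffOn ℝ (Set.Ici (0:ℝ)) := uniqueDiffOn_Ici 0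
  have hψc : ContDiffOn ℝ 1 ψ (Set.Ici 0) := hsmooth.derivWithin hud (by norm_num)
  have hψd : HasDerivWithinAt ψ (-a) (Set.Ici 0) 0 := by
    have h2 : derivWithin ψ (Set.Ici 0) 0 = -a := by
      rw [← hd2, iteratedDerivWithin_succ]
      refine (derivWithin_congr (fun x hx => ?_) ?_).symm
      · exact congrFun iteratedDerivWithin_one x
      · exact congrFun iteratedDerivWithin_one 0
    rw [← h2]
    exact ((hψc.differentiableOn one_ne_zero) 0 (by simp)).hasDerivWithinAt
  have hslope : Tendsto (fun x => (ψ x - 1) / x) (𝓝[>] (0:ℝ)) (𝓝 (-a)) := by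
    have h1 := hasDerivWithinAt_iff_tendsto_slope.1 hψd
    have hmono : 𝓝[>] (0:ℝ) ≤ 𝓝[Set.Ici 0 \ {0}] (0:ℝ) :=
      nhdsWithin_mono _ (fun x hx => ⟨le_of_lt (Set.mem_Ioi.1 hx), (Set.mem_Ioi.1 hx).ne'⟩)
    refine (h1.mono_left hmono).congr' ?_
    filter_upwards [self_mem_nhdsWithin] with x hx
    simp [slope, hd1, div_eq_inv_mul]
  have hφd : ∀ x ∈ Set.Ioo (0:ℝ) 1, HasDerivAt φ (ψ x) x := by
    intro x hx
    have hnb : Set.Ici (0:ℝ) ∈ 𝓝 x := Ici_mem_nhds hx.1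
    have hdiff : DifferentiableAt ℝ φ x :=
      ((hsmooth.contDiffAt hnb).differentiableAt (by norm_num))
    have := hdiff.hasDerivAt
    rwa [hψ, derivWithin_of_mem_nhds hnb]
  have hff' : ∀ x ∈ Set.Ioo (0:ℝ) 1, HasDerivAt (fun x => φ x - x) (ψ x - 1) x :=
    fun x hx => (hφd x hx).sub (hasDerivAt_id x)
  have hgg' : ∀ x ∈ Set.Ioo (0:ℝ) 1, HasDerivAt (fun x : ℝ => x ^ 2) (2 * x) x :=
    fun x _ => by simpa using hasDerivAt_pow 2 x
  have hg' : ∀ x ∈ Set.Ioo (0:ℝ) 1, (2 : ℝ) * x ≠ 0 :=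
    fun x hx => ne_of_gt (by linarith [hx.1])
  have hfa : Tendsto (fun x => φ x - x) (𝓝[>] (0:ℝ)) (𝓝 0) := by
    have hc : ContinuousWithinAt φ (Set.Ici 0) 0 := (hsmooth.continuousOn) 0 (by simp)
    have hφt : Tendsto φ (𝓝[>] (0:ℝ)) (𝓝 0) := by
      have := hc.tendsto
      rw [h0] at this
      exact this.mono_left (nhdsWithin_mono _ Set.Ioi_subset_Ici_self)
    simpa using hφt.sub (tendsto_nhdsWithin_of_tendsto_nhds (f := fun x : ℝ => x) tendsto_id)
  have hga : Tendsto (fun x : ℝ => x ^ 2) (𝓝[>] (0:ℝ)) (𝓝 0) := by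
    have : Tendsto (fun x : ℝ => x ^ 2) (𝓝 0) (𝓝 0) := by
      simpa using (continuous_pow 2).tendsto (0:ℝ)
    exact this.mono_left nhdsWithin_le_nhds
  have hdiv : Tendsto (fun x => (ψ x - 1) / (2 * x)) (𝓝[>] (0:ℝ)) (𝓝 (-a / 2)) := by
    have h2 := hslope.div_const 2
    refine h2.congr' ?_
    filter_upwards [self_mem_nhdsWithin] with x hx
    rw [div_div, mul_comm]
  exact HasDerivAt.lhopital_zero_right_on_Ioo one_pos hff' hgg' hg' hfa hga hdiv

open Matrix

set_option maxHeartbeats 1000000 in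
theorem stmt_19 (φ : ℝ → ℝ) (a : ℝ) (ha : 0 ≤ a)
    (heven : ∀ t, φ (-t) = φ t)
    (hsmooth : ContDiffOn ℝ 2 φ (Set.Ici 0))
    (h0 : φ 0 = 0)
    (hd1 : derivWithin φ (Set.Ici 0) 0 = 1)
    (hd2 : iteratedDerivWithin 2 φ (Set.Ici 0) 0 = -a)
    (H : Matrix (Fin 2) (Fin 2) ℝ) (y : Fin 2 → ℝ) (lam : ℝ) (hlam : 0 < lam)
    (γmin : ℝ)
    (heig : ∃ u : Fin 2 → ℝ, u ≠ 0 ∧ (Hᵀ * H).mulVec u = γmin • u)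
    (hmin : ∀ x : Fin 2 → ℝ, γmin * (x ⬝ᵥ x) ≤ x ⬝ᵥ (Hᵀ * H).mulVec x)
    (hconv : ConvexOn ℝ Set.univ (fun x : Fin 2 → ℝ =>
      (1 / 2) * ∑ i, (y i - H.mulVec x i) ^ 2 + lam * φ (x 0) + lam * φ (x 1))) :
    a ≤ γmin / lam := by
  obtain ⟨u, hu, hueig⟩ := heig
  have habs : ∀ z, φ |z| = φ z := by
    intro z
    rcases le_or_gt 0 z with h | h
    · rw [abs_of_nonneg h]
    · rw [abs_of_neg h, heven]
  set v := H.mulVec u with hv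
  set N := u 0 ^ 2 + u 1 ^ 2 with hN
  have hNpos : 0 < N := by
    have hor : u 0 ≠ 0 ∨ u 1 ≠ 0 := by
      by_contra hcon
      push_neg at hcon
      exact hu (by ext i; fin_cases i <;> simp [hcon.1, hcon.2])
    rcases hor with h | h
    · have h1 := abs_pos.mpr h
      nlinarith [sq_abs (u 0), sq_nonneg (u 1)]
    · have h1 := abs_pos.mpr h
      nlinarith [sq_abs (u 1), sq_nonneg (u 0)]
  have hvv : v 0 ^ 2 + v 1 ^ 2 = γmin * N := by
    have h0e := congrFun hueig 0
    have h1e := congrFun hueig 1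
    simp only [Matrix.mulVec, Matrix.mul_apply, dotProduct, Fin.sum_univ_two,
      Matrix.transpose_apply, Pi.smul_apply, smul_eq_mul] at h0e h1e
    simp only [hv, hN, Matrix.mulVec, dotProduct, Fin.sum_univ_two]
    linear_combination (u 0) * h0e + (u 1) * h1e
  have hkey : ∀ t : ℝ, 0 < t →
      0 ≤ lam * (φ (2*(t*|u 0|)) - 2 * φ (t*|u 0|)) +
          lam * (φ (2*(t*|u 1|)) - 2 * φ (t*|u 1|)) + t^2 * (γmin * N) := by
    intro t ht
    have hc := hconv.2 (Set.mem_univ (0 : Fin 2 → ℝ)) (Set.mem_univ ((2*t) • u))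
      (by norm_num : (0:ℝ) ≤ 1/2) (by norm_num : (0:ℝ) ≤ 1/2) (by norm_num : (1:ℝ)/2 + 1/2 = 1)
    have hpt : ((1:ℝ)/2) • (0 : Fin 2 → ℝ) + ((1:ℝ)/2) • ((2*t) • u) = t • u := by
      ext i
      simp [Pi.smul_apply, smul_eq_mul]
      ring
    rw [hpt] at hc
    simp only [Matrix.mulVec_smul, Matrix.mulVec_zero, Pi.smul_apply, Pi.zero_apply,
      smul_eq_mul, Fin.sum_univ_two, h0, mul_zero, sub_zero, ← hv] at hc
    have e0a : φ (2*(t*|u 0|)) = φ (2*t*u 0) := by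
      rw [show (2:ℝ)*(t*|u 0|) = |2*t*u 0| by rw [abs_mul, abs_mul, abs_of_pos ht, abs_two]; ring,
        habs]
    have e0b : φ (t*|u 0|) = φ (t*u 0) := by
      rw [show t*|u 0| = |t*u 0| by rw [abs_mul, abs_of_pos ht], habs]
    have e1a : φ (2*(t*|u 1|)) = φ (2*t*u 1) := by
      rw [show (2:ℝ)*(t*|u 1|) = |2*t*u 1| by rw [abs_mul, abs_mul, abs_of_pos ht, abs_two]; ring,
        habs]
    have e1b : φ (t*|u 1|) = φ (t*u 1) := by
      rw [show t*|u 1| = |t*u 1| by rw [abs_mul, abs_of_pos ht], habs]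
    rw [e0a, e0b, e1a, e1b, ← hvv]
    nlinarith [hc]
  have tl := taylor_limit φ a hsmooth h0 hd1 hd2
  have main : ∀ ε : ℝ, 0 < ε → lam * a ≤ γmin + 6 * lam * ε := by
    intro ε hε
    obtain ⟨δ, hδ, hδ'⟩ := Metric.tendsto_nhdsWithin_nhds.1 tl ε hε
    have est : ∀ s : ℝ, 0 ≤ s → 2*s < δ → φ (2*s) - 2 * φ s ≤ (-a + 6*ε) * s^2 := by
      intro s hs h2s
      rcases eq_or_lt_of_le hs with h | h
      · rw [← h]
        norm_num [h0]
      · have hs2 : (0:ℝ) < s^2 := by positivity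
        have hs2' : (0:ℝ) < (2*s)^2 := by positivity
        have e1 := hδ' (Set.mem_Ioi.2 h) (by rw [Real.dist_eq, sub_zero, abs_of_pos h]; linarith)
        have e2 := hδ' (Set.mem_Ioi.2 (by linarith : (0:ℝ) < 2*s))
          (by rw [Real.dist_eq, sub_zero, abs_of_pos (by linarith : (0:ℝ) < 2*s)]; linarith)
        rw [Real.dist_eq, abs_lt] at e1 e2
        have b1' : (-ε - a/2) * s^2 < φ s - s := by
          have h' : -ε - a/2 < (φ s - s)/s^2 := by linarith [e1.1]
          calc (-ε - a/2) * s^2 < ((φ s - s)/s^2) * s^2 := by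
                exact mul_lt_mul_of_pos_right h' hs2
            _ = φ s - s := by field_simp
        have b2 : φ (2*s) - 2*s < (ε - a/2) * (2*s)^2 := by
          have h' : (φ (2*s) - 2*s)/(2*s)^2 < ε - a/2 := by linarith [e2.2]
          calc φ (2*s) - 2*s = ((φ (2*s) - 2*s)/(2*s)^2) * (2*s)^2 := by field_simp
            _ < (ε - a/2) * (2*s)^2 := mul_lt_mul_of_pos_right h' hs2'
        nlinarith [b1', b2]
    obtain ⟨t, M, hMpos, ht, hu0M, hu1M, h3⟩ :
        ∃ t M : ℝ, 0 < M ∧ 0 < t ∧ |u 0| < M ∧ |u 1| < M ∧ t * M = δ/2 := by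
      refine ⟨δ/(2*(|u 0|+|u 1|+1)), |u 0|+|u 1|+1, by positivity, by positivity,
        by linarith [abs_nonneg (u 1)], by linarith [abs_nonneg (u 0)], ?_⟩
      have hpos : (0:ℝ) < |u 0|+|u 1|+1 := by positivity
      field_simp
    have hb0 : 2*(t*|u 0|) < δ := by
      have h2 : t * |u 0| < t * M := (mul_lt_mul_iff_right₀ ht).2 hu0M
      linarith
    have hb1 : 2*(t*|u 1|) < δ := by
      have h2 : t * |u 1| < t * M := (mul_lt_mul_iff_right₀ ht).2 hu1M
      linarith
    have p0 := est (t*|u 0|) (mul_nonneg ht.le (abs_nonneg _)) hb0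
    have p1 := est (t*|u 1|) (mul_nonneg ht.le (abs_nonneg _)) hb1
    have hsq0 : (t*|u 0|)^2 = t^2 * (u 0)^2 := by
      rw [mul_pow, sq_abs]
    have hsq1 : (t*|u 1|)^2 = t^2 * (u 1)^2 := by
      rw [mul_pow, sq_abs]
    have hk := hkey t ht
    rw [hsq0] at p0
    rw [hsq1] at p1
    have ht2N : 0 < t^2 * N := mul_pos (pow_pos ht 2) hNpos
    have q0 := mul_le_mul_of_nonneg_left p0 hlam.le
    have q1 := mul_le_mul_of_nonneg_left p1 hlam.le
    have hsum : 0 ≤ lam * ((-a + 6*ε) * (t^2 * u 0 ^ 2)) +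
        lam * ((-a + 6*ε) * (t^2 * u 1 ^ 2)) + t^2 * (γmin * N) := by
      linarith [hk, q0, q1]
    have hfactor : lam * ((-a + 6*ε) * (t^2 * u 0 ^ 2)) +
        lam * ((-a + 6*ε) * (t^2 * u 1 ^ 2)) + t^2 * (γmin * N)
        = (lam * (-a + 6*ε) + γmin) * (t^2 * N) := by
      rw [hN]; ring
    rw [hfactor] at hsum
    have hX : 0 ≤ lam * (-a + 6*ε) + γmin := by
      by_contra hneg
      push_neg at hneg
      nlinarith [mul_neg_of_neg_of_pos hneg ht2N]
    nlinarith [hX]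
  have hfin : lam * a ≤ γmin := by
    by_contra hcon
    push_neg at hcon
    have hη : 0 < (lam * a - γmin) / (7 * lam) := by
      have : 0 < lam * a - γmin := by linarith
      positivity
    have := main _ hη
    have h7 : 6 * lam * ((lam * a - γmin) / (7 * lam)) = 6/7 * (lam * a - γmin) := by
      field_simp
    rw [h7] at this
    linarith
  rw [le_div_iff₀ hlam]
  linarith
end
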